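/- If X is a good set of G and P is a path in G whose both end vertices lie in X, then X ∪ V(P) is a good set of G. -/

import Mathlib

/-- `X ⊆ V(G)` is good (w.r.t. `k`) if every vertex of `X` lies on a cycle of length
at least `k/2` in `G[X]`, and any two distinct vertices of `X` are joined by a path
of length at least `k/2` in `G[X]`. -/
def Good {V : Type*} (G : SimpleGraph V) (k : ℕ) (X : Set V) : Prop :=
  (∀ u : X, ∃ c : (G.induce X).Walk u u, c.IsCycle ∧ k ≤ 2 * c.length) ∧
  (∀ u v : X, u ≠ v → ∃ p : (G.induce X).Walk u v, p.IsPath ∧ k ≤ 2 * p.length)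

namespace GoodAux
open SimpleGraph Walk

variable {V : Type*} {G : SimpleGraph V}

lemma isPath_append {u v w : V} {p : G.Walk u v} {q : G.Walk v w}
    (hp : p.IsPath) (hq : q.IsPath)
    (h : ∀ a, a ∈ p.support → a ∈ q.support → a = v) : (p.append q).IsPath := by
  rw [Walk.isPath_def, Walk.support_append, List.nodup_append]
  refine ⟨hp.support_nodup, hq.support_nodup.tail, ?_⟩
  rintro a ha _ ha' rfl
  have hv : a = v := h a ha (List.mem_of_mem_tail ha')
  subst hv
  have hnd := hq.support_nodup
  rw [q.support_eq_cons] at hnd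
  exact (List.nodup_cons.mp hnd).1 ha'

lemma isCycle_append {u v : V} {p : G.Walk u v} {q : G.Walk v u}
    (hp : p.IsPath) (hq : q.IsPath) (hlen : 2 ≤ p.length)
    (h : ∀ a, a ∈ p.support → a ∈ q.support → a = u ∨ a = v) :
    (p.append q).IsCycle := by
  cases p with
  | nil => simp at hlen
  | @cons _ z _ hadj p₂ =>
    rw [Walk.cons_append, Walk.cons_isCycle_iff]
    have hp' := (Walk.cons_isPath_iff hadj p₂).mp hp
    constructor
    · apply isPath_append hp'.1 hq
      intro a ha haq
      rcases h a (by simp [ha]) haq with h1 | h1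
      · exact absurd (h1 ▸ ha) hp'.2
      · exact h1
    · rw [Walk.edges_append, List.mem_append]
      rintro (he | he)
      · exact hp'.2 (Walk.fst_mem_support_of_mem_edges p₂ he)
      · have hz : z ∈ q.support := Walk.snd_mem_support_of_mem_edges q he
        rcases h z (by simp) hz with h1 | h1
        · exact hadj.ne' h1
        · subst h1
          have hnil : p₂ = Walk.nil := Walk.isPath_iff_eq_nil.mp hp'.1
          subst hnil
          simp at hlen

variable [DecidableEq V]

lemma length_rotate {u v : V} (c : G.Walk v v) (h : u ∈ c.support) :
    (c.rotate u h).length = c.length := by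
  have h2 := congrArg Walk.length (c.take_spec h)
  rw [Walk.length_append] at h2
  unfold Walk.rotate
  rw [Walk.length_append]
  omega

lemma mem_take_mem_drop {b c u : V} {w : G.Walk b c} (hw : w.IsPath) (hu : u ∈ w.support)
    {a : V} (h1 : a ∈ (w.takeUntil u hu).support) (h2 : a ∈ (w.dropUntil u hu).support) :
    a = u := by
  by_contra hne
  have h2' : a ∈ (w.dropUntil u hu).support.tail := by
    rw [Walk.support_eq_cons (w.dropUntil u hu)] at h2
    rcases List.mem_cons.mp h2 with h | h
    · exact absurd h hne
    · exact h
  have hnodup := hw.support_nodup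
  rw [← w.take_spec hu, Walk.support_append, List.nodup_append] at hnodup
  exact hnodup.2.2 _ h1 _ h2' rfl

lemma end_not_mem_takeUntil {b c u : V} {w : G.Walk b c} (hw : w.IsPath) (hu : u ∈ w.support)
    (hne : u ≠ c) : c ∉ (w.takeUntil u hu).support :=
  fun hc => hne (mem_take_mem_drop hw hu hc (Walk.end_mem_support _)).symm

lemma start_not_mem_dropUntil {b c u : V} {w : G.Walk b c} (hw : w.IsPath) (hu : u ∈ w.support)
    (hne : u ≠ b) : b ∉ (w.dropUntil u hu).support :=
  fun hb => hne (mem_take_mem_drop hw hu (Walk.start_mem_support _) hb).symm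

def liftWalk {T : Set V} : ∀ {x y : V} (p : G.Walk x y), (∀ v ∈ p.support, v ∈ T) →
    ∀ (hx : x ∈ T) (hy : y ∈ T), (G.induce T).Walk ⟨x, hx⟩ ⟨y, hy⟩
  | _, _, Walk.nil, _, _, _ => Walk.nil
  | _, _, Walk.cons a q, h, hx, hy =>
      Walk.cons (by simpa using a)
        (liftWalk q (fun v hv => h v (by simp [hv])) (h _ (by simp)) hy)

theorem liftWalk_support {T : Set V} : ∀ {x y : V} (p : G.Walk x y)
    (h : ∀ v ∈ p.support, v ∈ T) (hx : x ∈ T) (hy : y ∈ T),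
    (liftWalk p h hx hy).support.map Subtype.val = p.support
  | _, _, Walk.nil, _, _, _ => rfl
  | _, _, Walk.cons a q, h, hx, hy => by
      simp only [liftWalk, Walk.support_cons, List.map_cons, liftWalk_support q _ _ _]

theorem liftWalk_length {T : Set V} : ∀ {x y : V} (p : G.Walk x y)
    (h : ∀ v ∈ p.support, v ∈ T) (hx : x ∈ T) (hy : y ∈ T),
    (liftWalk p h hx hy).length = p.length
  | _, _, Walk.nil, _, _, _ => rfl
  | _, _, Walk.cons a q, h, hx, hy => by
      simp only [liftWalk, Walk.length_cons, liftWalk_length q _ _ _]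

theorem liftWalk_isPath {T : Set V} {x y : V} {p : G.Walk x y}
    (h : ∀ v ∈ p.support, v ∈ T) (hx : x ∈ T) (hy : y ∈ T) (hp : p.IsPath) :
    (liftWalk p h hx hy).IsPath := by
  rw [Walk.isPath_def]
  have hn := hp.support_nodup
  rw [← liftWalk_support p h hx hy] at hn
  exact hn.of_map

theorem mem_liftWalk_support {T : Set V} {x y : V} {p : G.Walk x y}
    (h : ∀ v ∈ p.support, v ∈ T) (hx : x ∈ T) (hy : y ∈ T) (a : T) :
    a ∈ (liftWalk p h hx hy).support ↔ (a : V) ∈ p.support := by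
  rw [← liftWalk_support p h hx hy]
  constructor
  · exact fun ha => List.mem_map_of_mem ha
  · intro ha
    obtain ⟨b, hb, hba⟩ := List.mem_map.mp ha
    exact (Subtype.ext hba : b = a) ▸ hb

lemma ear {k : ℕ} {X : Set V} (hX : Good G k X)
    {x y : V} (hx : x ∈ X) (hy : y ∈ X) (p : G.Walk x y) (hp : p.IsPath)
    (hint : ∀ v ∈ p.support, v ∈ X → v = x ∨ v = y) :
    Good G k (X ∪ {v | v ∈ p.support}) := by
  by_cases hSX : {v | v ∈ p.support} ⊆ X
  · rwa [Set.union_eq_left.mpr hSX]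
  set T := X ∪ {v | v ∈ p.support} with hT
  have hsub : X ⊆ T := Set.subset_union_left
  have hxy : x ≠ y := by
    rintro rfl
    have hnil := Walk.isPath_iff_eq_nil.mp hp
    subst hnil
    exact hSX (by intro v hv; simp only [Set.mem_setOf_eq, Walk.support_nil,
      List.mem_singleton] at hv; exact hv ▸ hx)
  have hlen2 : 2 ≤ p.length := by
    cases p with
    | nil => exact absurd rfl hxy
    | cons ha q =>
      cases q with
      | nil =>
        exact absurd (by
          intro v hv
          simp only [Set.mem_setOf_eq, Walk.support_cons, Walk.support_nil,
            List.mem_cons, List.mem_singleton] at hv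
          rcases hv with rfl | hv
          · exact hx
          · rcases hv with rfl | hv
            · exact hy
            · simp at hv) hSX
      | cons hb r =>
        simp only [Walk.length_cons]
        omega
  have hxT : x ∈ T := Or.inl hx
  have hyT : y ∈ T := Or.inl hy
  have hpT : ∀ v ∈ p.support, v ∈ T := fun v hv => Or.inr hv
  -- lifted path
  obtain ⟨pH, hpH, hpHlen, hmemp⟩ :
      ∃ pH : (G.induce T).Walk ⟨x, hxT⟩ ⟨y, hyT⟩, pH.IsPath ∧ pH.length = p.length ∧
        ∀ a : T, a ∈ pH.support ↔ (a : V) ∈ p.support :=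
    ⟨liftWalk p hpT hxT hyT, liftWalk_isPath hpT hxT hyT hp,
      liftWalk_length p hpT hxT hyT, mem_liftWalk_support hpT hxT hyT⟩
  -- mapped X-paths
  have getQ : ∀ (a b : V) (ha : a ∈ X) (hb : b ∈ X), a ≠ b →
      ∃ q : (G.induce T).Walk ⟨a, hsub ha⟩ ⟨b, hsub hb⟩,
        q.IsPath ∧ k ≤ 2 * q.length ∧ ∀ c ∈ q.support, (c : V) ∈ X := by
    intro a b ha hb hab
    obtain ⟨q, hq, hqlen⟩ := hX.2 ⟨a, ha⟩ ⟨b, hb⟩ (fun h => hab (congrArg Subtype.val h))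
    refine ⟨q.map (G.induceHomOfLE hsub).toHom, ?_, ?_, ?_⟩
    · exact Walk.map_isPath_of_injective (G.induceHomOfLE hsub).injective hq
    · exact hqlen.trans_eq (congrArg (2 * ·) (Walk.length_map _ _).symm)
    · intro c hc
      obtain ⟨d, hd, rfl⟩ := List.mem_map.mp ((congrArg (c ∈ ·) (Walk.support_map _ _)).mp hc)
      exact d.2
  have hXval : ∀ a : T, a ∈ pH.support → (a : V) ∈ X →
      a = (⟨x, hxT⟩ : T) ∨ a = (⟨y, hyT⟩ : T) := by
    intro a ha haX
    rcases hint a ((hmemp a).mp ha) haX with h | h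
    · exact Or.inl (Subtype.ext h)
    · exact Or.inr (Subtype.ext h)
  -- the big cycle
  obtain ⟨C, hC, hCk, hCmem⟩ :
      ∃ C : (G.induce T).Walk ⟨x, hxT⟩ ⟨x, hxT⟩, C.IsCycle ∧ k ≤ 2 * C.length ∧
        ∀ a : T, (a : V) ∈ p.support → a ∈ C.support := by
    obtain ⟨Q, hQ, hQlen, hQX⟩ := getQ y x hy hx hxy.symm
    refine ⟨pH.append Q, ?_, ?_, ?_⟩
    · apply isCycle_append hpH hQ (by omega)
      intro a h1 h2
      exact hXval a h1 (hQX a h2)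
    · rw [Walk.length_append]; omega
    · intro a ha
      exact Walk.subset_support_append_left _ _ ((hmemp a).mpr ha)
  constructor
  · rintro ⟨uv, huT⟩
    by_cases huX : uv ∈ X
    · obtain ⟨c, hc, hclen⟩ := hX.1 ⟨uv, huX⟩
      refine ⟨c.map (G.induceHomOfLE hsub).toHom, ?_, ?_⟩
      · exact hc.map (G.induceHomOfLE hsub).injective
      · exact hclen.trans_eq (congrArg (2 * ·) (Walk.length_map _ _).symm)
    · have huS : uv ∈ p.support := huT.resolve_left huX
      have huC : (⟨uv, huT⟩ : T) ∈ C.support := hCmem _ huS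
      exact ⟨C.rotate _ huC, hC.rotate huC, by rwa [length_rotate]⟩
  · have hPX : ∀ u : T, (u : V) ∈ p.support → (u : V) ∉ X →
        ∀ v : T, (v : V) ∈ X →
        ∃ r : (G.induce T).Walk u v, r.IsPath ∧ k ≤ 2 * r.length := by
      intro u huS huX v hvX
      have hu_pH : u ∈ pH.support := (hmemp u).mpr huS
      have hux : u ≠ (⟨x, hxT⟩ : T) := fun h => huX (by rw [h]; exact hx)
      have huy : u ≠ (⟨y, hyT⟩ : T) := fun h => huX (by rw [h]; exact hy)
      have hyTake := end_not_mem_takeUntil hpH hu_pH huy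
      have hxDrop := start_not_mem_dropUntil hpH hu_pH hux
      by_cases hvx : (v : V) = x
      · obtain ⟨Q, hQ, hQlen, hQX⟩ := getQ y v hy hvX
          (by intro h; rw [hvx] at h; exact hxy h.symm)
        refine ⟨(pH.dropUntil u hu_pH).append Q, ?_, ?_⟩
        · apply isPath_append (hpH.dropUntil hu_pH) hQ
          intro a ha haQ
          rcases hXval a (Walk.support_dropUntil_subset pH hu_pH ha) (hQX a haQ) with h | h
          · exact absurd (h ▸ ha) hxDrop
          · exact h
        · rw [Walk.length_append]; omega
      · obtain ⟨Q, hQ, hQlen, hQX⟩ := getQ x v hx hvX (fun h => hvx h.symm)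
        refine ⟨(pH.takeUntil u hu_pH).reverse.append Q, ?_, ?_⟩
        · apply isPath_append (hpH.takeUntil hu_pH).reverse hQ
          intro a ha haQ
          rw [Walk.support_reverse, List.mem_reverse] at ha
          rcases hXval a (Walk.support_takeUntil_subset pH hu_pH ha) (hQX a haQ) with h | h
          · exact h
          · exact absurd (h ▸ ha) hyTake
        · rw [Walk.length_append]; omega
    have hcore : ∀ (α β : T) (A1 : (G.induce T).Walk ⟨x, hxT⟩ α)
        (A2 : (G.induce T).Walk β ⟨y, hyT⟩),
        A1.IsPath → A2.IsPath →
        (∀ a ∈ A1.support, a ∈ pH.support) → (∀ a ∈ A2.support, a ∈ pH.support) →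
        (⟨y, hyT⟩ : T) ∉ A1.support → (⟨x, hxT⟩ : T) ∉ A2.support →
        (∀ a, a ∈ A1.support → a ∈ A2.support → False) →
        ∃ r : (G.induce T).Walk α β, r.IsPath ∧ k ≤ 2 * r.length := by
      intro α β A1 A2 h1 h2 hm1 hm2 hy1 hx2 hdisj
      obtain ⟨Q, hQ, hQlen, hQX⟩ := getQ x y hx hy hxy
      refine ⟨A1.reverse.append (Q.append A2.reverse), ?_, ?_⟩
      · apply isPath_append h1.reverse
        · apply isPath_append hQ h2.reverse
          intro a ha haA2
          rw [Walk.support_reverse, List.mem_reverse] at haA2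
          rcases hXval a (hm2 a haA2) (hQX a ha) with h | h
          · exact absurd (h ▸ haA2) hx2
          · exact h
        · intro a ha haI
          rw [Walk.support_reverse, List.mem_reverse] at ha
          rcases (Walk.mem_support_append_iff _ _).mp haI with hq | ha2
          · rcases hXval a (hm1 a ha) (hQX a hq) with h | h
            · exact h
            · exact absurd (h ▸ ha) hy1
          · rw [Walk.support_reverse, List.mem_reverse] at ha2
            exact (hdisj a ha ha2).elim
      · rw [Walk.length_append, Walk.length_append, Walk.length_reverse,
          Walk.length_reverse]
        omega
    intro u v huv
    by_cases huX : (u : V) ∈ X <;> by_cases hvX : (v : V) ∈ X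
    · obtain ⟨q, hq, hqlen⟩ := hX.2 ⟨u, huX⟩ ⟨v, hvX⟩
        (fun h => huv (Subtype.ext (Subtype.mk_eq_mk.mp h)))
      exact ⟨q.map (G.induceHomOfLE hsub).toHom,
        Walk.map_isPath_of_injective (G.induceHomOfLE hsub).injective hq,
        hqlen.trans_eq (congrArg (2 * ·) (Walk.length_map _ _).symm)⟩
    · have hvS : (v : V) ∈ p.support := v.2.resolve_left hvX
      obtain ⟨r, hr, hrlen⟩ := hPX v hvS hvX u huX
      exact ⟨r.reverse, hr.reverse, by rwa [Walk.length_reverse]⟩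
    · have huS : (u : V) ∈ p.support := u.2.resolve_left huX
      exact hPX u huS huX v hvX
    · have huS : (u : V) ∈ p.support := u.2.resolve_left huX
      have hvS : (v : V) ∈ p.support := v.2.resolve_left hvX
      have hu_pH : u ∈ pH.support := (hmemp u).mpr huS
      have hv_pH : v ∈ pH.support := (hmemp v).mpr hvS
      have hux : u ≠ (⟨x, hxT⟩ : T) := fun h => huX (by rw [h]; exact hx)
      have huy : u ≠ (⟨y, hyT⟩ : T) := fun h => huX (by rw [h]; exact hy)
      have hsplit : v ∈ (pH.takeUntil u hu_pH).support ∨ v ∈ (pH.dropUntil u hu_pH).support := by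
        have h := Walk.mem_support_append_iff (t := v) (pH.takeUntil u hu_pH)
          (pH.dropUntil u hu_pH)
        rw [pH.take_spec hu_pH] at h
        exact h.mp hv_pH
      rcases hsplit with hvt | hvd
      · have htp : (pH.takeUntil u hu_pH).IsPath := hpH.takeUntil hu_pH
        obtain ⟨r, hr, hrlen⟩ := hcore v u ((pH.takeUntil u hu_pH).takeUntil v hvt)
          (pH.dropUntil u hu_pH)
          (htp.takeUntil hvt) (hpH.dropUntil hu_pH)
          (fun a ha => Walk.support_takeUntil_subset pH hu_pH
            (Walk.support_takeUntil_subset _ hvt ha))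
          (fun a ha => Walk.support_dropUntil_subset pH hu_pH ha)
          (fun hyA => end_not_mem_takeUntil hpH hu_pH huy
            (Walk.support_takeUntil_subset _ hvt hyA))
          (start_not_mem_dropUntil hpH hu_pH hux)
          (fun a ha1 ha2 => by
            have hau : a = u := mem_take_mem_drop hpH hu_pH
              (Walk.support_takeUntil_subset _ hvt ha1) ha2
            subst hau
            exact end_not_mem_takeUntil htp hvt (Ne.symm huv) ha1)
        exact ⟨r.reverse, hr.reverse, by rwa [Walk.length_reverse]⟩
      · have hdp : (pH.dropUntil u hu_pH).IsPath := hpH.dropUntil hu_pH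
        obtain ⟨r, hr, hrlen⟩ := hcore u v (pH.takeUntil u hu_pH)
          ((pH.dropUntil u hu_pH).dropUntil v hvd)
          (hpH.takeUntil hu_pH) (hdp.dropUntil hvd)
          (fun a ha => Walk.support_takeUntil_subset pH hu_pH ha)
          (fun a ha => Walk.support_dropUntil_subset pH hu_pH
            (Walk.support_dropUntil_subset _ hvd ha))
          (end_not_mem_takeUntil hpH hu_pH huy)
          (fun hxA => start_not_mem_dropUntil hpH hu_pH hux
            (Walk.support_dropUntil_subset _ hvd hxA))
          (fun a ha1 ha2 => by
            have hau : a = u := mem_take_mem_drop hpH hu_pH ha1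
              (Walk.support_dropUntil_subset _ hvd ha2)
            subst hau
            exact start_not_mem_dropUntil hdp hvd (Ne.symm huv) ha2)
        exact ⟨r, hr, hrlen⟩

lemma main {k : ℕ} : ∀ (n : ℕ) (X : Set V) (x y : V), x ∈ X → y ∈ X →
    ∀ p : G.Walk x y, p.length ≤ n → p.IsPath → Good G k X →
    Good G k (X ∪ {v | v ∈ p.support}) := by
  intro n
  induction n with
  | zero =>
    intro X x y hx hy p hpl hp hX
    apply ear hX hx hy p hp
    intro v hv hvX
    cases p with
    | nil =>
      simp only [Walk.support_nil, List.mem_singleton] at hv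
      exact Or.inl hv
    | cons h q => simp at hpl
  | succ n ih =>
    intro X x y hx hy p hpl hp hX
    by_cases hw : ∃ w ∈ p.support, w ∈ X ∧ w ≠ x ∧ w ≠ y
    · obtain ⟨w, hwsupp, hwX, hwx, hwy⟩ := hw
      have hspec := p.take_spec hwsupp
      have hlen : (p.takeUntil w hwsupp).length + (p.dropUntil w hwsupp).length = p.length := by
        rw [← Walk.length_append, hspec]
      have h1 : 1 ≤ (p.takeUntil w hwsupp).length := by
        rcases Nat.eq_zero_or_pos (p.takeUntil w hwsupp).length with h0 | h
        · exact absurd (Walk.eq_of_length_eq_zero h0).symm hwx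
        · exact h
      have h2 : 1 ≤ (p.dropUntil w hwsupp).length := by
        rcases Nat.eq_zero_or_pos (p.dropUntil w hwsupp).length with h0 | h
        · exact absurd (Walk.eq_of_length_eq_zero h0) hwy
        · exact h
      have G1 := ih X x w hx hwX (p.takeUntil w hwsupp) (by omega) (hp.takeUntil hwsupp) hX
      have G2 := ih (X ∪ {v | v ∈ (p.takeUntil w hwsupp).support}) w y (Or.inl hwX)
        (Or.inl hy) (p.dropUntil w hwsupp) (by omega) (hp.dropUntil hwsupp) G1
      have hset : X ∪ {v | v ∈ p.support} =
          (X ∪ {v | v ∈ (p.takeUntil w hwsupp).support}) ∪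
            {v | v ∈ (p.dropUntil w hwsupp).support} := by
        ext a
        have hmem := Walk.mem_support_append_iff (t := a) (p.takeUntil w hwsupp)
          (p.dropUntil w hwsupp)
        rw [hspec] at hmem
        simp only [Set.mem_union, Set.mem_setOf_eq, hmem]
        tauto
      rw [hset]
      exact G2
    · push_neg at hw
      apply ear hX hx hy p hp
      intro v hv hvX
      by_cases hvx : v = x
      · exact Or.inl hvx
      · exact Or.inr (hw v hv hvX hvx)

end GoodAux

/-- If `X` is good and `P` is a path in `G` with both end vertices in `X`,
then `X ∪ V(P)` is good. -/
theorem stmt_3 {V : Type*} (G : SimpleGraph V) (k : ℕ) (X : Set V)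
    (hX : Good G k X) (x y : V) (hx : x ∈ X) (hy : y ∈ X)
    (p : G.Walk x y) (hp : p.IsPath) :
    Good G k (X ∪ {v | v ∈ p.support}) := by
  classical
  exact GoodAux.main p.length X x y hx hy p le_rfl hp hX
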